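/- arXiv:2312.07455 — 3 statements merged into one kernel-verified Lean document; each statement's English description precedes it below -/
import Mathlib

section
/- Let C : (Fin d → Fin n) → ℝ be an order-d tensor and let a, b, f ⊆ Fin d be pairwise disjoint with a ∪ b ∪ f = Fin d. Let r_a, r_b, r_f denote the ranks of the unfolding matrices of C along a, along b, and along f, respectively. Then there exist C_a : ((a → Fin n) × Fin r_a) → ℝ, C_b : ((b → Fin n) × Fin r_b) → ℝ, C_f : (Fin r_f × (f → Fin n)) → ℝ, and a core tensor G : Fin r_a × Fin r_b × Fin r_f → ℝ such that C(i) = Σ_{α,β,θ} C_a(i_a, α) · C_b(i_b, β) · G(α, β, θ) · C_f(θ, i_f) for every index tuple i; moreover C_a and C_b (viewed as matrices with columns indexed by Fin r_a, Fin r_b) have full column rank, and C_f (viewed as a matrix with rows indexed by Fin r_f) has full row rank. -/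
open Module Matrix

/-- Full-rank factorization of a real matrix. -/
lemma matrix_rank_factorization {m k : Type*} [Fintype m] [Fintype k] [DecidableEq k]
    (M : Matrix m k ℝ) {r : ℕ} (hr : M.rank = r) :
    ∃ (P : Matrix m (Fin r) ℝ) (Q : Matrix (Fin r) k ℝ),
      M = P * Q ∧ LinearIndependent ℝ Pᵀ ∧ P.rank = r ∧ Q.rank = r := by
  classical
  set W := LinearMap.range M.mulVecLin with hWdef
  have hW : finrank ℝ W = r := hr
  let v : Basis (Fin r) ℝ W := finBasisOfFinrankEq ℝ W hW
  have hmem : ∀ j : k, (fun i => M i j) ∈ W := by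
    intro j
    refine ⟨Pi.single j 1, ?_⟩
    funext i
    simp [Matrix.mulVecLin, Matrix.mulVec, dotProduct, Pi.single_apply]
  let P : Matrix m (Fin r) ℝ := fun i α => (v α : m → ℝ) i
  let Q : Matrix (Fin r) k ℝ := fun α j => v.repr ⟨fun i => M i j, hmem j⟩ α
  have hMPQ : M = P * Q := by
    ext i j
    have hs := v.sum_repr ⟨fun i => M i j, hmem j⟩
    have hs' := congrFun (congrArg Subtype.val hs) i
    simp only [Submodule.coe_sum, Finset.sum_apply, SetLike.val_smul, Pi.smul_apply,
      smul_eq_mul] at hs'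
    rw [Matrix.mul_apply, ← hs']
    simp [P, Q, mul_comm]
  have hind : LinearIndependent ℝ Pᵀ := v.linearIndependent.map' W.subtype W.ker_subtype
  have hPrank : P.rank = r := by
    refine le_antisymm (P.rank_le_card_width.trans_eq (Fintype.card_fin r)) ?_
    calc r = M.rank := hr.symm
    _ ≤ P.rank := by rw [hMPQ]; exact Matrix.rank_mul_le_left P Q
  have hQrank : Q.rank = r := by
    refine le_antisymm (Q.rank_le_card_height.trans_eq (Fintype.card_fin r)) ?_
    calc r = M.rank := hr.symm
    _ ≤ Q.rank := by rw [hMPQ]; exact Matrix.rank_mul_le_right P Q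
  exact ⟨P, Q, hMPQ, hind, hPrank, hQrank⟩

/-- Rank is preserved when the columns are transformed by an injective linear map. -/
lemma rank_eq_of_cols_map {m m' k : Type*} [Fintype m] [Fintype m'] [Fintype k]
    (M : Matrix m k ℝ) (N : Matrix m' k ℝ) (φ : (m → ℝ) →ₗ[ℝ] (m' → ℝ))
    (hφ : Function.Injective φ) (h : ∀ j, Nᵀ j = φ (Mᵀ j)) :
    N.rank = M.rank := by
  rw [Matrix.rank_eq_finrank_span_cols, Matrix.rank_eq_finrank_span_cols]
  have hN : N.col = ⇑φ ∘ M.col := funext h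
  rw [hN, Set.range_comp, ← Submodule.map_span]
  exact (LinearEquiv.finrank_eq
    (Submodule.equivMapOfInjective φ hφ (Submodule.span ℝ (Set.range Mᵀ)))).symm

/-- Rank is invariant under reindexing (rectangular version). -/
lemma rank_reindex_rect {k l m n : Type*} [Fintype l] [Fintype n]
    (e₁ : k ≃ m) (e₂ : l ≃ n) (M : Matrix k l ℝ) :
    (Matrix.reindex e₁ e₂ M).rank = M.rank := by
  rw [Matrix.rank, Matrix.rank, Matrix.mulVecLin_reindex, LinearMap.range_comp,
    LinearMap.range_comp, LinearEquiv.range, Submodule.map_top, LinearEquiv.finrank_map_eq]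

/-- Splitting an index-tuple type along a disjoint pair of subsets covering `S`. -/
def prodEquiv {d n : ℕ} (S s t : Finset (Fin d)) (hst : Disjoint s t)
    (h : ∀ j, j ∈ S ↔ j ∈ s ∨ j ∈ t) :
    ({j // j ∈ S} → Fin n) ≃ (({j // j ∈ s} → Fin n) × ({j // j ∈ t} → Fin n)) where
  toFun g := (fun x => g ⟨x.1, (h x.1).2 (Or.inl x.2)⟩, fun x => g ⟨x.1, (h x.1).2 (Or.inr x.2)⟩)
  invFun p := fun x => if hx : (x : Fin d) ∈ s then p.1 ⟨x.1, hx⟩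
    else p.2 ⟨x.1, ((h x.1).1 x.2).resolve_left hx⟩
  left_inv g := by
    funext x
    by_cases hx : (x : Fin d) ∈ s <;> simp [hx]
  right_inv p := by
    refine Prod.ext (funext fun x => ?_) (funext fun x => ?_)
    · simp [x.2]
    · have hx : (x : Fin d) ∉ s := Finset.disjoint_right.mp hst x.2
      simp [hx]

/-- Combine three partial index tuples into a full index tuple. -/
def glue3 {d n : ℕ} {a b f : Finset (Fin d)} (hm : ∀ j : Fin d, j ∈ a ∨ j ∈ b ∨ j ∈ f)
    (ia : {j // j ∈ a} → Fin n) (ib : {j // j ∈ b} → Fin n) (iff' : {j // j ∈ f} → Fin n) :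
    Fin d → Fin n :=
  fun j => if h : j ∈ a then ia ⟨j, h⟩ else if h' : j ∈ b then ib ⟨j, h'⟩
    else iff' ⟨j, ((hm j).resolve_left h).resolve_left h'⟩

/-- The unfolding matrix of an order-`d` tensor `C` along a subset `S ⊆ Fin d`:
rows are indexed by index tuples on the complement `Sᶜ`, columns by index tuples on `S`,
and the entry is the value of `C` at the combined index tuple. -/
def unfolding {d n : ℕ} (C : (Fin d → Fin n) → ℝ) (S : Finset (Fin d)) :
    Matrix ({j // j ∈ Sᶜ} → Fin n) ({j // j ∈ S} → Fin n) ℝ :=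
  Matrix.of fun iSbar iS =>
    C (fun j => if h : j ∈ S then iS ⟨j, h⟩ else iSbar ⟨j, Finset.mem_compl.mpr h⟩)

/-- Existence of the core decomposition `C(i) = Σ_{α,β,θ} C_a(i_a,α) C_b(i_b,β) G(α,β,θ) C_f(θ,i_f)`
for a tripartition `[d] = a ∪ b ∪ f`, with `C_a`, `C_b` of full column rank and `C_f` of full
row rank, where `r_a`, `r_b`, `r_f` are the ranks of the unfoldings of `C` along `a`, `b`, `f`. -/
theorem core_decomposition (d n : ℕ)
    (C : (Fin d → Fin n) → ℝ) (a b f : Finset (Fin d))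
    (hab : Disjoint a b) (haf : Disjoint a f) (hbf : Disjoint b f)
    (hcover : a ∪ b ∪ f = Finset.univ)
    (ra rb rf : ℕ)
    (hra : (unfolding C a).rank = ra)
    (hrb : (unfolding C b).rank = rb)
    (hrf : (unfolding C f).rank = rf) :
    ∃ (Ca : (({j // j ∈ a} → Fin n) × Fin ra) → ℝ)
      (Cb : (({j // j ∈ b} → Fin n) × Fin rb) → ℝ)
      (Cf : (Fin rf × ({j // j ∈ f} → Fin n)) → ℝ)
      (G : Fin ra × Fin rb × Fin rf → ℝ),
      (∀ i : Fin d → Fin n,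
        C i = ∑ α : Fin ra, ∑ β : Fin rb, ∑ θ : Fin rf,
          Ca ((fun j => i j.1), α) * Cb ((fun j => i j.1), β) * G (α, β, θ) *
            Cf (θ, (fun j => i j.1))) ∧
      (Matrix.of fun (ia : {j // j ∈ a} → Fin n) (α : Fin ra) => Ca (ia, α)).rank = ra ∧
      (Matrix.of fun (ib : {j // j ∈ b} → Fin n) (β : Fin rb) => Cb (ib, β)).rank = rb ∧
      (Matrix.of fun (θ : Fin rf) (iff' : {j // j ∈ f} → Fin n) => Cf (θ, iff')).rank = rf := by
  classical
  -- membership facts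
  have hmem : ∀ j : Fin d, j ∈ a ∨ j ∈ b ∨ j ∈ f := by
    intro j
    have : j ∈ a ∪ b ∪ f := hcover.symm ▸ Finset.mem_univ j
    simpa [Finset.mem_union, or_assoc] using this
  have hA : ∀ j : Fin d, j ∈ aᶜ ↔ j ∈ b ∨ j ∈ f := by
    intro j
    simp only [Finset.mem_compl]
    constructor
    · intro hj; exact (hmem j).resolve_left hj
    · rintro (hj | hj) hja
      · exact Finset.disjoint_left.mp hab hja hj
      · exact Finset.disjoint_left.mp haf hja hj
  have hB : ∀ j : Fin d, j ∈ bᶜ ↔ j ∈ a ∨ j ∈ f := by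
    intro j
    simp only [Finset.mem_compl]
    constructor
    · intro hj
      rcases hmem j with h | h | h
      · exact Or.inl h
      · exact absurd h hj
      · exact Or.inr h
    · rintro (hj | hj) hjb
      · exact Finset.disjoint_left.mp hab hj hjb
      · exact Finset.disjoint_left.mp hbf hjb hj
  have hF : ∀ j : Fin d, j ∈ fᶜ ↔ j ∈ a ∨ j ∈ b := by
    intro j
    simp only [Finset.mem_compl]
    constructor
    · intro hj
      rcases hmem j with h | h | h
      · exact Or.inl h
      · exact Or.inr h
      · exact absurd h hj
    · rintro (hj | hj) hjf
      · exact Finset.disjoint_left.mp haf hj hjf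
      · exact Finset.disjoint_left.mp hbf hj hjf
  -- restriction identity
  have hT : ∀ i : Fin d → Fin n,
      C i = C (glue3 hmem (fun j => i j.1) (fun j => i j.1) (fun j => i j.1)) := by
    intro i
    congr 1
    funext j
    unfold glue3
    split_ifs <;> rfl
  -- rank of the three glued unfoldings
  have hrank1 : (Matrix.of fun (ia : {j // j ∈ a} → Fin n)
      (p : ({j // j ∈ b} → Fin n) × ({j // j ∈ f} → Fin n)) =>
      C (glue3 hmem ia p.1 p.2)).rank = ra := by
    have heq : (Matrix.of fun (ia : {j // j ∈ a} → Fin n)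
        (p : ({j // j ∈ b} → Fin n) × ({j // j ∈ f} → Fin n)) =>
        C (glue3 hmem ia p.1 p.2)) =
        Matrix.reindex (Equiv.refl _) (prodEquiv aᶜ b f hbf hA) (unfolding C a)ᵀ := by
      ext ia p
      simp only [Matrix.of_apply, Matrix.reindex_apply, Matrix.submatrix_apply,
        Matrix.transpose_apply, unfolding, Equiv.refl_symm, Equiv.refl_apply]
      congr 1
    rw [heq, rank_reindex_rect, Matrix.rank_transpose]
    exact hra
  have hrank2 : (Matrix.of fun (p : ({j // j ∈ a} → Fin n) × ({j // j ∈ f} → Fin n))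
      (ib : {j // j ∈ b} → Fin n) =>
      C (glue3 hmem p.1 ib p.2)).rank = rb := by
    have heq : (Matrix.of fun (p : ({j // j ∈ a} → Fin n) × ({j // j ∈ f} → Fin n))
        (ib : {j // j ∈ b} → Fin n) =>
        C (glue3 hmem p.1 ib p.2)) =
        Matrix.reindex (prodEquiv bᶜ a f haf hB) (Equiv.refl _) (unfolding C b) := by
      ext p ib
      simp only [Matrix.of_apply, Matrix.reindex_apply, Matrix.submatrix_apply,
        unfolding, Equiv.refl_symm, Equiv.refl_apply]
      congr 1
      funext j
      unfold glue3 prodEquiv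
      by_cases h1 : j ∈ a
      · have h2 : j ∉ b := fun h2 => Finset.disjoint_left.mp hab h1 h2
        simp [h1, h2, Equiv.symm]
      · by_cases h2 : j ∈ b <;> simp [h1, h2, Equiv.symm]
    rw [heq, rank_reindex_rect]
    exact hrb
  have hrank3 : (Matrix.of fun (p : ({j // j ∈ a} → Fin n) × ({j // j ∈ b} → Fin n))
      (iff' : {j // j ∈ f} → Fin n) =>
      C (glue3 hmem p.1 p.2 iff')).rank = rf := by
    have heq : (Matrix.of fun (p : ({j // j ∈ a} → Fin n) × ({j // j ∈ b} → Fin n))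
        (iff' : {j // j ∈ f} → Fin n) =>
        C (glue3 hmem p.1 p.2 iff')) =
        Matrix.reindex (prodEquiv fᶜ a b hab hF) (Equiv.refl _) (unfolding C f) := by
      ext p iff'
      simp only [Matrix.of_apply, Matrix.reindex_apply, Matrix.submatrix_apply,
        unfolding, Equiv.refl_symm, Equiv.refl_apply]
      congr 1
      funext j
      unfold glue3 prodEquiv
      by_cases h1 : j ∈ a
      · have h3 : j ∉ f := fun h3 => Finset.disjoint_left.mp haf h1 h3
        simp [h1, h3, Equiv.symm]
      · by_cases h2 : j ∈ b
        · have h3 : j ∉ f := fun h3 => Finset.disjoint_left.mp hbf h2 h3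
          simp [h1, h2, h3, Equiv.symm]
        · have h3 : j ∈ f := ((hmem j).resolve_left h1).resolve_left h2
          simp [h1, h2, h3, Equiv.symm]
    rw [heq, rank_reindex_rect]
    exact hrf
  -- Step 1: factor along a
  obtain ⟨P, Q, hPQ, hPind, hPrank, hQrank⟩ := matrix_rank_factorization
    (Matrix.of fun (ia : {j // j ∈ a} → Fin n)
      (p : ({j // j ∈ b} → Fin n) × ({j // j ∈ f} → Fin n)) =>
      C (glue3 hmem ia p.1 p.2)) hrank1
  have hfac1 : ∀ ia ib iff', C (glue3 hmem ia ib iff') = ∑ α, P ia α * Q α (ib, iff') := by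
    intro ia ib iff'
    have := congrFun (congrFun hPQ ia) (ib, iff')
    simpa [Matrix.mul_apply] using this
  -- Step 2: rank of the reduced b-unfolding
  set K : Matrix (({j // j ∈ a} → Fin n) × ({j // j ∈ f} → Fin n))
      (Fin ra × ({j // j ∈ f} → Fin n)) ℝ :=
    Matrix.of fun p q => if p.2 = q.2 then P p.1 q.1 else 0 with hK
  have hKapp : ∀ (v : Fin ra × ({j // j ∈ f} → Fin n) → ℝ) p,
      K.mulVecLin v p = ∑ α, P p.1 α * v (α, p.2) := by
    intro v p
    simp [hK, Matrix.mulVecLin, Matrix.mulVec, dotProduct, Fintype.sum_prod_type,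
      ite_mul, mul_comm]
  have hKinj : Function.Injective K.mulVecLin := by
    have hker : ∀ v, K.mulVecLin v = 0 → v = 0 := by
      intro v hv
      funext q
      obtain ⟨α, if0⟩ := q
      have h0 : ∀ ia : {j // j ∈ a} → Fin n, ∑ α', v (α', if0) * P ia α' = 0 := by
        intro ia
        have := congrFun hv (ia, if0)
        rw [hKapp] at this
        simpa [mul_comm] using this
      exact Fintype.linearIndependent_iff.mp hPind (fun α' => v (α', if0))
        (by funext ia; simpa using h0 ia) α
    intro u w huw
    exact sub_eq_zero.mp (hker (u - w) (by rw [map_sub, huw, sub_self]))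
  have hrank2' : (Matrix.of fun (q : Fin ra × ({j // j ∈ f} → Fin n))
      (ib : {j // j ∈ b} → Fin n) => Q q.1 (ib, q.2)).rank = rb := by
    rw [← hrank2]
    refine (rank_eq_of_cols_map _ _ K.mulVecLin hKinj ?_).symm
    intro ib
    funext p
    simp only [Matrix.transpose_apply, Matrix.of_apply]
    rw [hKapp]
    exact hfac1 p.1 ib p.2
  -- Step 2: factor along b
  obtain ⟨Pb, Qb, hPQb, hPbind, hPbrank, hQbrank⟩ := matrix_rank_factorization
    (Matrix.of fun (q : Fin ra × ({j // j ∈ f} → Fin n))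
      (ib : {j // j ∈ b} → Fin n) => Q q.1 (ib, q.2))ᵀ
    (r := rb) (by rw [Matrix.rank_transpose]; exact hrank2')
  have hfac2 : ∀ α ib iff', Q α (ib, iff') = ∑ β, Pb ib β * Qb β (α, iff') := by
    intro α ib iff'
    have := congrFun (congrFun hPQb ib) (α, iff')
    simpa [Matrix.mul_apply] using this
  -- Step 3: rank of the reduced f-unfolding
  set K3 : Matrix (({j // j ∈ a} → Fin n) × ({j // j ∈ b} → Fin n))
      (Fin ra × Fin rb) ℝ :=
    Matrix.of fun p q => P p.1 q.1 * Pb p.2 q.2 with hK3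
  have hK3app : ∀ (v : Fin ra × Fin rb → ℝ) p,
      K3.mulVecLin v p = ∑ α, ∑ β, P p.1 α * Pb p.2 β * v (α, β) := by
    intro v p
    simp [hK3, Matrix.mulVecLin, Matrix.mulVec, dotProduct, Fintype.sum_prod_type, mul_assoc]
  have hK3inj : Function.Injective K3.mulVecLin := by
    have hker : ∀ v, K3.mulVecLin v = 0 → v = 0 := by
      intro v hv
      have hmid : ∀ (ib : {j // j ∈ b} → Fin n) (α : Fin ra),
          ∑ β, Pb ib β * v (α, β) = 0 := by
        intro ib α
        refine Fintype.linearIndependent_iff.mp hPind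
          (fun α' => ∑ β, Pb ib β * v (α', β)) ?_ α
        funext ia
        have := congrFun hv (ia, ib)
        rw [hK3app] at this
        simp only [Pi.zero_apply] at this
        simp only [Finset.sum_apply, Pi.smul_apply, Matrix.transpose_apply, smul_eq_mul,
          Pi.zero_apply]
        rw [← this]
        refine Finset.sum_congr rfl fun α' _ => ?_
        rw [Finset.sum_mul]
        refine Finset.sum_congr rfl fun β _ => ?_
        ring
      funext q
      obtain ⟨α, β⟩ := q
      refine Fintype.linearIndependent_iff.mp hPbind (fun β' => v (α, β')) ?_ β
      funext ib
      have := hmid ib α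
      simpa [mul_comm] using this
    intro u w huw
    exact sub_eq_zero.mp (hker (u - w) (by rw [map_sub, huw, sub_self]))
  have hrank3' : (Matrix.of fun (q : Fin ra × Fin rb)
      (iff' : {j // j ∈ f} → Fin n) => Qb q.2 (q.1, iff')).rank = rf := by
    rw [← hrank3]
    refine (rank_eq_of_cols_map _ _ K3.mulVecLin hK3inj ?_).symm
    intro iff'
    funext p
    simp only [Matrix.transpose_apply, Matrix.of_apply]
    rw [hK3app, hfac1 p.1 p.2 iff']
    refine Finset.sum_congr rfl fun α _ => ?_
    rw [hfac2, Finset.mul_sum]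
    refine Finset.sum_congr rfl fun β _ => ?_
    show P p.1 α * (Pb p.2 β * Qb β (α, iff')) = P p.1 α * Pb p.2 β * Qb β (α, iff')
    ring
  -- Step 3: factor along f
  obtain ⟨P3, Q3, hPQ3, _, hP3rank, hQ3rank⟩ := matrix_rank_factorization
    (Matrix.of fun (q : Fin ra × Fin rb)
      (iff' : {j // j ∈ f} → Fin n) => Qb q.2 (q.1, iff')) (r := rf) hrank3'
  have hfac3 : ∀ α β iff', Qb β (α, iff') = ∑ θ, P3 (α, β) θ * Q3 θ iff' := by
    intro α β iff'
    have := congrFun (congrFun hPQ3 (α, β)) iff'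
    simpa [Matrix.mul_apply] using this
  -- Assemble
  refine ⟨fun x => P x.1 x.2, fun x => Pb x.1 x.2, fun x => Q3 x.1 x.2,
    fun x => P3 (x.1, x.2.1) x.2.2, ?_, hPrank, hPbrank, hQ3rank⟩
  intro i
  rw [hT i, hfac1]
  refine Finset.sum_congr rfl fun α _ => ?_
  rw [hfac2, Finset.mul_sum]
  refine Finset.sum_congr rfl fun β _ => ?_
  rw [hfac3, Finset.mul_sum, Finset.mul_sum]
  refine Finset.sum_congr rfl fun θ _ => ?_
  ring
end

section
/- Let {ψ_i}_{i ∈ Fin n} be a family of square-integrable functions ℝ → ℝ that is orthonormal in L²(ℝ). Let C : (Fin d → Fin n) → ℝ and let p : ℝ^d → ℝ be the functional tensor network p(x) = Σ_i C(i) ∏_{j=1}^d ψ_{i_j}(x_j). Let a, b, f ⊆ Fin d be pairwise disjoint with a ∪ b ∪ f = Fin d, let S_a, S_b, S_f be sketch tensors on a, b, f with sketch dimensions r̃_a, r̃_b, r̃_f, and let s_a, s_b, s_f be the associated sketch functions. Then for all μ ∈ Fin r̃_a, ν ∈ Fin r̃_b, ζ ∈ Fin r̃_f, the function x ↦ p(x)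 s_a(x_a, μ) s_b(x_b, ν) s_f(x_f, ζ) is integrable on ℝ^d and ∫_{ℝ^d} p(x) s_a(x_a, μ) s_b(x_b, ν) s_f(x_f, ζ) dx = Σ_{i : Fin d → Fin n} C(i) S_a(i_a, μ) S_b(i_b, ν) S_f(i_f, ζ). -/
open MeasureTheory

/-- For a functional tensor network `p` over an orthonormal family `{ψ_i} ⊆ L²(ℝ)` and sketch
functions `s_a`, `s_b`, `s_f` built from sketch tensors on a tripartition `[d] = a ∪ b ∪ f`,
the function `x ↦ p(x) s_a(x_a,μ) s_b(x_b,ν) s_f(x_f,ζ)` is integrable on `ℝ^d` and its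
integral equals the contraction `Σ_i C(i) S_a(i_a,μ) S_b(i_b,ν) S_f(i_f,ζ)`. -/
theorem sketch_moment_formula_tripartition (d n : ℕ) (ψ : Fin n → ℝ → ℝ)
    (hψL2 : ∀ i, MemLp (ψ i) 2 (volume : Measure ℝ))
    (horth : ∀ i j, ∫ x : ℝ, ψ i x * ψ j x = if i = j then (1 : ℝ) else 0)
    (C : (Fin d → Fin n) → ℝ)
    (p : (Fin d → ℝ) → ℝ)
    (hp : ∀ x : Fin d → ℝ, p x = ∑ i : Fin d → Fin n, C i * ∏ j : Fin d, ψ (i j) (x j))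
    (a b f : Finset (Fin d))
    (hab : Disjoint a b) (haf : Disjoint a f) (hbf : Disjoint b f)
    (hcover : a ∪ b ∪ f = Finset.univ)
    (rta rtb rtf : ℕ)
    (Sa : (({j // j ∈ a} → Fin n) × Fin rta) → ℝ)
    (Sb : (({j // j ∈ b} → Fin n) × Fin rtb) → ℝ)
    (Sf : (({j // j ∈ f} → Fin n) × Fin rtf) → ℝ)
    (sa : ({j // j ∈ a} → ℝ) → Fin rta → ℝ)
    (sb : ({j // j ∈ b} → ℝ) → Fin rtb → ℝ)
    (sf : ({j // j ∈ f} → ℝ) → Fin rtf → ℝ)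
    (hsa : ∀ (xa : {j // j ∈ a} → ℝ) (μ : Fin rta),
      sa xa μ = ∑ ia : {j // j ∈ a} → Fin n, Sa (ia, μ) * ∏ j : {j // j ∈ a}, ψ (ia j) (xa j))
    (hsb : ∀ (xb : {j // j ∈ b} → ℝ) (ν : Fin rtb),
      sb xb ν = ∑ ib : {j // j ∈ b} → Fin n, Sb (ib, ν) * ∏ j : {j // j ∈ b}, ψ (ib j) (xb j))
    (hsf : ∀ (xf : {j // j ∈ f} → ℝ) (ζ : Fin rtf),
      sf xf ζ = ∑ if' : {j // j ∈ f} → Fin n,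
        Sf (if', ζ) * ∏ j : {j // j ∈ f}, ψ (if' j) (xf j)) :
    ∀ (μ : Fin rta) (ν : Fin rtb) (ζ : Fin rtf),
      Integrable (fun x : Fin d → ℝ =>
        p x * sa (fun j => x j.1) μ * sb (fun j => x j.1) ν * sf (fun j => x j.1) ζ)
        (volume : Measure (Fin d → ℝ)) ∧
      ∫ x : Fin d → ℝ,
          p x * sa (fun j => x j.1) μ * sb (fun j => x j.1) ν * sf (fun j => x j.1) ζ =
        ∑ i : Fin d → Fin n,
          C i * Sa ((fun j => i j.1), μ) * Sb ((fun j => i j.1), ν) *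
            Sf ((fun j => i j.1), ζ) := by
    classical
  intro μ ν ζ
  -- products of two ψ's are integrable
  have hmul : ∀ i j : Fin n, Integrable (fun x : ℝ => ψ i x * ψ j x) := by
    intro i j
    have h12 : (1 : ENNReal) / 1 = 1 / 2 + 1 / 2 := by
      rw [div_one, ENNReal.div_add_div_same, one_add_one_eq_two,
        ENNReal.div_self two_ne_zero ENNReal.ofNat_ne_top]
    exact memLp_one_iff_integrable.mp
      ((hψL2 j).smul (μ := volume) (hψL2 i) (p := 2) (q := 2) (r := 1) (hpqr := ⟨by simpa [one_div] using h12.symm⟩))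
  have hmemf : ∀ j : Fin d, j ∉ a → j ∉ b → j ∈ f := by
    intro j hja hjb
    have : j ∈ a ∪ b ∪ f := hcover ▸ Finset.mem_univ j
    simp only [Finset.mem_union] at this
    tauto
  -- combined index
  set k : (({j // j ∈ a} → Fin n)) → (({j // j ∈ b} → Fin n)) → (({j // j ∈ f} → Fin n)) →
      Fin d → Fin n :=
    fun ia ib if' j =>
      if h : j ∈ a then ia ⟨j, h⟩ else if h' : j ∈ b then ib ⟨j, h'⟩
        else if' ⟨j, hmemf j h h'⟩ with hkdef
  have hka : ∀ ia ib if' (j : {j // j ∈ a}), k ia ib if' j.1 = ia j := by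
    intro ia ib if' j
    simp only [hkdef]
    rw [dif_pos j.2]
  have hkb : ∀ ia ib if' (j : {j // j ∈ b}), k ia ib if' j.1 = ib j := by
    intro ia ib if' j
    simp only [hkdef]
    rw [dif_neg (Finset.disjoint_right.mp hab j.2), dif_pos j.2]
  have hkf : ∀ ia ib if' (j : {j // j ∈ f}), k ia ib if' j.1 = if' j := by
    intro ia ib if' j
    simp only [hkdef]
    rw [dif_neg (Finset.disjoint_right.mp haf j.2),
      dif_neg (Finset.disjoint_right.mp hbf j.2)]
  -- splitting products over the tripartition
  have hprodk : ∀ ia ib if' (x : Fin d → ℝ),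
      (∏ j : Fin d, ψ (k ia ib if' j) (x j)) =
        (∏ j : {j // j ∈ a}, ψ (ia j) (x j.1)) * (∏ j : {j // j ∈ b}, ψ (ib j) (x j.1)) *
          (∏ j : {j // j ∈ f}, ψ (if' j) (x j.1)) := by
    intro ia ib if' x
    have hdj : Disjoint (a ∪ b) f := Finset.disjoint_union_left.mpr ⟨haf, hbf⟩
    have h1 : (∏ j : Fin d, ψ (k ia ib if' j) (x j)) =
        ∏ j ∈ a ∪ b ∪ f, ψ (k ia ib if' j) (x j) := by rw [hcover]
    rw [h1, Finset.prod_union hdj, Finset.prod_union hab]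
    have ha' : (∏ j ∈ a, ψ (k ia ib if' j) (x j)) = ∏ j : {j // j ∈ a}, ψ (ia j) (x j.1) := by
      rw [Finset.univ_eq_attach, ← Finset.prod_attach a (fun j => ψ (k ia ib if' j) (x j))]
      exact Finset.prod_congr rfl fun j _ => by rw [hka]
    have hb' : (∏ j ∈ b, ψ (k ia ib if' j) (x j)) = ∏ j : {j // j ∈ b}, ψ (ib j) (x j.1) := by
      rw [Finset.univ_eq_attach, ← Finset.prod_attach b (fun j => ψ (k ia ib if' j) (x j))]
      exact Finset.prod_congr rfl fun j _ => by rw [hkb]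
    have hf' : (∏ j ∈ f, ψ (k ia ib if' j) (x j)) = ∏ j : {j // j ∈ f}, ψ (if' j) (x j.1) := by
      rw [Finset.univ_eq_attach, ← Finset.prod_attach f (fun j => ψ (k ia ib if' j) (x j))]
      exact Finset.prod_congr rfl fun j _ => by rw [hkf]
    rw [ha', hb', hf']
  -- the common summand
  set G : (Fin d → Fin n) → ({j // j ∈ a} → Fin n) → ({j // j ∈ b} → Fin n) →
      ({j // j ∈ f} → Fin n) → (Fin d → ℝ) → ℝ :=
    fun i ia ib if' x =>
      (C i * Sa (ia, μ) * Sb (ib, ν) * Sf (if', ζ)) *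
        ∏ j : Fin d, (ψ (i j) (x j) * ψ (k ia ib if' j) (x j)) with hGdef
  -- the pointwise expansion
  have hpt : ∀ x : Fin d → ℝ,
      p x * sa (fun j => x j.1) μ * sb (fun j => x j.1) ν * sf (fun j => x j.1) ζ =
      ∑ i : Fin d → Fin n, ∑ ia : {j // j ∈ a} → Fin n, ∑ ib : {j // j ∈ b} → Fin n,
        ∑ if' : {j // j ∈ f} → Fin n, G i ia ib if' x := by
    intro x
    have hswap : (∑ i : Fin d → Fin n, ∑ ia : {j // j ∈ a} → Fin n,
        ∑ ib : {j // j ∈ b} → Fin n, ∑ if' : {j // j ∈ f} → Fin n, G i ia ib if' x) =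
        ∑ if' : {j // j ∈ f} → Fin n, ∑ ib : {j // j ∈ b} → Fin n,
          ∑ ia : {j // j ∈ a} → Fin n, ∑ i : Fin d → Fin n, G i ia ib if' x := by
      calc (∑ i : Fin d → Fin n, ∑ ia : {j // j ∈ a} → Fin n,
          ∑ ib : {j // j ∈ b} → Fin n, ∑ if' : {j // j ∈ f} → Fin n, G i ia ib if' x)
          = ∑ ia : {j // j ∈ a} → Fin n, ∑ i : Fin d → Fin n,
            ∑ ib : {j // j ∈ b} → Fin n, ∑ if' : {j // j ∈ f} → Fin n, G i ia ib if' x :=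
            Finset.sum_comm
        _ = ∑ ia : {j // j ∈ a} → Fin n, ∑ ib : {j // j ∈ b} → Fin n,
            ∑ i : Fin d → Fin n, ∑ if' : {j // j ∈ f} → Fin n, G i ia ib if' x :=
            Finset.sum_congr rfl fun _ _ => Finset.sum_comm
        _ = ∑ ia : {j // j ∈ a} → Fin n, ∑ ib : {j // j ∈ b} → Fin n,
            ∑ if' : {j // j ∈ f} → Fin n, ∑ i : Fin d → Fin n, G i ia ib if' x :=
            Finset.sum_congr rfl fun _ _ => Finset.sum_congr rfl fun _ _ => Finset.sum_comm
        _ = ∑ ib : {j // j ∈ b} → Fin n, ∑ ia : {j // j ∈ a} → Fin n,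
            ∑ if' : {j // j ∈ f} → Fin n, ∑ i : Fin d → Fin n, G i ia ib if' x :=
            Finset.sum_comm
        _ = ∑ ib : {j // j ∈ b} → Fin n, ∑ if' : {j // j ∈ f} → Fin n,
            ∑ ia : {j // j ∈ a} → Fin n, ∑ i : Fin d → Fin n, G i ia ib if' x :=
            Finset.sum_congr rfl fun _ _ => Finset.sum_comm
        _ = ∑ if' : {j // j ∈ f} → Fin n, ∑ ib : {j // j ∈ b} → Fin n,
            ∑ ia : {j // j ∈ a} → Fin n, ∑ i : Fin d → Fin n, G i ia ib if' x :=
            Finset.sum_comm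
    rw [hswap, hp, hsa, hsb, hsf]
    simp only [Finset.sum_mul, Finset.mul_sum]
    refine Finset.sum_congr rfl fun if' _ => Finset.sum_congr rfl fun ib _ =>
      Finset.sum_congr rfl fun ia _ => Finset.sum_congr rfl fun i _ => ?_
    simp only [hGdef]
    rw [Finset.prod_mul_distrib, hprodk]
    ring
  have hTint : ∀ (i : Fin d → Fin n) ia ib if',
      Integrable (G i ia ib if') (volume : Measure (Fin d → ℝ)) := by
    intro i ia ib if'
    exact (Integrable.fintype_prod (f := fun j t => ψ (i j) t * ψ (k ia ib if' j) t)
      (fun j => hmul (i j) (k ia ib if' j))).const_mul _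
  have hfun : (fun x : Fin d → ℝ =>
      p x * sa (fun j => x j.1) μ * sb (fun j => x j.1) ν * sf (fun j => x j.1) ζ) =
      fun x => ∑ i : Fin d → Fin n, ∑ ia : {j // j ∈ a} → Fin n, ∑ ib : {j // j ∈ b} → Fin n,
        ∑ if' : {j // j ∈ f} → Fin n, G i ia ib if' x := funext hpt
  constructor
  · rw [hfun]
    exact integrable_finset_sum _ fun i _ => integrable_finset_sum _ fun ia _ =>
      integrable_finset_sum _ fun ib _ => integrable_finset_sum _ fun if' _ => hTint i ia ib if'
  · rw [hfun]
    rw [integral_finset_sum _ fun i _ => integrable_finset_sum _ fun ia _ =>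
      integrable_finset_sum _ fun ib _ => integrable_finset_sum _ fun if' _ => hTint i ia ib if']
    refine Finset.sum_congr rfl fun i _ => ?_
    rw [integral_finset_sum _ fun ia _ => integrable_finset_sum _ fun ib _ =>
      integrable_finset_sum _ fun if' _ => hTint i ia ib if']
    conv_lhs =>
      enter [2, ia]
      rw [integral_finset_sum _ fun ib _ => integrable_finset_sum _ fun if' _ => hTint i ia ib if']
      enter [2, ib]
      rw [integral_finset_sum _ fun if' _ => hTint i ia ib if']
    -- value of each integral
    have hval : ∀ ia ib if',
        (∫ x : Fin d → ℝ, G i ia ib if' x) =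
        (C i * Sa (ia, μ) * Sb (ib, ν) * Sf (if', ζ)) *
          (if (ia = fun j => i j.1) ∧ (ib = fun j => i j.1) ∧ (if' = fun j => i j.1)
            then (1 : ℝ) else 0) := by
      intro ia ib if'
      simp only [hGdef]
      rw [integral_const_mul,
        integral_fintype_prod_volume_eq_prod (ι := Fin d) (fun j t => ψ (i j) t * ψ (k ia ib if' j) t)]
      congr 1
      have hco : ∀ j : Fin d, (∫ t : ℝ, ψ (i j) t * ψ (k ia ib if' j) t) =
          if i j = k ia ib if' j then (1 : ℝ) else 0 := fun j => horth _ _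
      rw [Finset.prod_congr rfl fun j _ => hco j, Finset.prod_boole]
      congr 1
      simp only [Finset.mem_univ, forall_true_left, eq_iff_iff]
      constructor
      · intro h
        refine ⟨funext fun j => ?_, funext fun j => ?_, funext fun j => ?_⟩
        · rw [← hka ia ib if' j]; exact (h j.1).symm
        · rw [← hkb ia ib if' j]; exact (h j.1).symm
        · rw [← hkf ia ib if' j]; exact (h j.1).symm
      · rintro ⟨h1, h2, h3⟩ j
        by_cases hja : j ∈ a
        · rw [show j = (⟨j, hja⟩ : {j // j ∈ a}).1 from rfl, hka, h1]
        · by_cases hjb : j ∈ b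
          · rw [show j = (⟨j, hjb⟩ : {j // j ∈ b}).1 from rfl, hkb, h2]
          · have hjf : j ∈ f := hmemf j hja hjb
            rw [show j = (⟨j, hjf⟩ : {j // j ∈ f}).1 from rfl, hkf, h3]
    simp only [hval]
    -- collapse the three sums
    rw [Fintype.sum_eq_single (fun j : {j // j ∈ a} => i j.1) ?h1]
    case h1 =>
      intro ia hia
      refine Finset.sum_eq_zero fun ib _ => Finset.sum_eq_zero fun if' _ => ?_
      rw [if_neg (fun h => hia h.1), mul_zero]
    rw [Fintype.sum_eq_single (fun j : {j // j ∈ b} => i j.1) ?h2]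
    case h2 =>
      intro ib hib
      refine Finset.sum_eq_zero fun if' _ => ?_
      rw [if_neg (fun h => hib h.2.1), mul_zero]
    rw [Fintype.sum_eq_single (fun j : {j // j ∈ f} => i j.1) ?h3]
    case h3 =>
      intro if' hif
      rw [if_neg (fun h => hif h.2.2), mul_zero]
    simp
end

section
/- Let Δ ≥ 1, μ ≥ 1, m = 2^μ, d = m^Δ = 2^{Δμ}, and define the interleaving map ι : (Fin m)^Δ → Fin d as follows: if for each δ ∈ {1,…,Δ} the number i_δ − 1 ∈ {0,…,m−1} has binary digits a_{δ1} a_{δ2} ⋯ a_{δμ} (most significant first), then ι(i_1,…,i_Δ) − 1 has the Δμ binary digits a_{11} a_{21} ⋯ a_{Δ1} a_{12} a_{22} ⋯ a_{Δ2} ⋯ a_{1μ} ⋯ a_{Δμ} (most significant first). Then: (i) ι is a bijection; and (ii) for every level l = Δμ' + δ with 0 ≤ μ' ≤ μ, 0 ≤ δ < Δ, 0 ≤ l ≤ Δμ, and every block index 1 ≤ k ≤ 2^l, the preimage ι⁻¹(I_k^{(l)}) of the hierarchical block I_k^{(l)} = {2^{Δμ−l}(k−1)+1, …, 2^{Δμ−l}k}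 is a Cartesian product J_1 × ⋯ × J_Δ, where each J_{δ'} ⊆ {1,…,m} is a dyadic interval of the form {c·2^t + 1, …, (c+1)·2^t} with t = μ − μ' − 1 if δ' ≤ δ and t = μ − μ' if δ' > δ. -/
/-- The interleaving map for a `Δ`-dimensional grid with `m = 2^μ` points per axis: the
(0-based) linearized index of the multi-index `i` is obtained by interleaving the `μ` binary
digits (most significant first) of the `Δ` coordinates, taking from each coordinate its
`t`-th most significant digit in turn, for `t = 1, …, μ`.  (The final `% 2^(Δ*μ)` is a
no-op since the interleaved value is always `< 2^(Δ*μ)`.) -/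
def interleave (Δ μ : ℕ) (i : Fin Δ → Fin (2 ^ μ)) : Fin (2 ^ (Δ * μ)) :=
  ⟨(∑ t : Fin μ, ∑ δ : Fin Δ,
      ((i δ).val / 2 ^ (μ - 1 - t.val)) % 2 * 2 ^ (Δ * μ - 1 - (t.val * Δ + δ.val)))
      % 2 ^ (Δ * μ),
    Nat.mod_lt _ (by positivity)⟩

open Finset

lemma sum_bits_lt (b : ℕ → ℕ) (hb : ∀ p, b p ≤ 1) (N : ℕ) :
    ∑ p ∈ range N, b p * 2 ^ p < 2 ^ N := by
  induction N with
  | zero => simp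
  | succ n ih =>
    rw [Finset.sum_range_succ, pow_succ]
    have := hb n
    nlinarith [ih, Nat.pow_pos (n := n) (show 0 < 2 by norm_num)]

lemma sum_bits_div (b : ℕ → ℕ) (hb : ∀ p, b p ≤ 1) (N s : ℕ) (hs : s ≤ N) :
    (∑ p ∈ range N, b p * 2 ^ p) / 2 ^ s = ∑ p ∈ range (N - s), b (s + p) * 2 ^ p := by
  have h1 : ∑ p ∈ range N, b p * 2 ^ p
      = (∑ p ∈ range s, b p * 2 ^ p) + 2 ^ s * ∑ p ∈ range (N - s), b (s + p) * 2 ^ p := by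
    have hsplit : N = s + (N - s) := by omega
    conv_lhs => rw [hsplit, Finset.sum_range_add]
    rw [Finset.mul_sum]
    congr 1
    refine Finset.sum_congr rfl fun p _ => ?_
    rw [pow_add]; ring
  rw [h1, Nat.add_mul_div_left _ _ (Nat.pow_pos (n := s) (by norm_num)),
    Nat.div_eq_of_lt (sum_bits_lt b hb s), Nat.zero_add]

lemma sum_bits_bit (b : ℕ → ℕ) (hb : ∀ p, b p ≤ 1) (N s : ℕ) (hs : s < N) :
    (∑ p ∈ range N, b p * 2 ^ p) / 2 ^ s % 2 = b s := by
  rw [sum_bits_div b hb N s hs.le]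
  have hNs : N - s = (N - s - 1) + 1 := by omega
  rw [hNs, Finset.sum_range_succ']
  have h2 : ∑ p ∈ range (N - s - 1), b (s + (p + 1)) * 2 ^ (p + 1)
      = 2 * ∑ p ∈ range (N - s - 1), b (s + (p + 1)) * 2 ^ p := by
    rw [Finset.mul_sum]
    refine Finset.sum_congr rfl fun p _ => ?_
    rw [pow_succ]; ring
  rw [h2]
  have := hb s
  simp only [Nat.add_zero, pow_zero, mul_one]
  omega

lemma sum_bits_inj (b c : ℕ → ℕ) (hb : ∀ p, b p ≤ 1) (hc : ∀ p, c p ≤ 1) (N : ℕ)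
    (h : ∑ p ∈ range N, b p * 2 ^ p = ∑ p ∈ range N, c p * 2 ^ p) :
    ∀ s, s < N → b s = c s := fun s hs => by
  rw [← sum_bits_bit b hb N s hs, ← sum_bits_bit c hc N s hs, h]

lemma bits_repr (m x : ℕ) (hx : x < 2 ^ m) :
    x = ∑ u ∈ range m, (x / 2 ^ u % 2) * 2 ^ u := by
  induction m generalizing x with
  | zero => simp at hx ⊢; omega
  | succ n ih =>
    have ihx := ih (x / 2) (by rw [pow_succ] at hx; omega)
    rw [Finset.sum_range_succ']
    have h2 : ∑ u ∈ range n, (x / 2 ^ (u + 1) % 2) * 2 ^ (u + 1)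
        = 2 * ∑ u ∈ range n, ((x / 2) / 2 ^ u % 2) * 2 ^ u := by
      rw [Finset.mul_sum]
      refine Finset.sum_congr rfl fun u _ => ?_
      rw [pow_succ', Nat.div_div_eq_div_mul]
      ring
    rw [h2, ← ihx]
    simp only [pow_zero, Nat.div_one, mul_one]
    omega

lemma div_pow_eq_iff_bits (m x y T : ℕ) (hx : x < 2 ^ m) (hy : y < 2 ^ m) (hT : T ≤ m) :
    x / 2 ^ T = y / 2 ^ T ↔ ∀ u, T ≤ u → u < m → x / 2 ^ u % 2 = y / 2 ^ u % 2 := by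
  constructor
  · intro h u hTu hum
    have hxu : x / 2 ^ u = (x / 2 ^ T) / 2 ^ (u - T) := by
      rw [Nat.div_div_eq_div_mul, ← pow_add, Nat.add_sub_cancel' hTu]
    have hyu : y / 2 ^ u = (y / 2 ^ T) / 2 ^ (u - T) := by
      rw [Nat.div_div_eq_div_mul, ← pow_add, Nat.add_sub_cancel' hTu]
    rw [hxu, hyu, h]
  · intro h
    have hbx : ∀ p, x / 2 ^ p % 2 ≤ 1 := fun p => Nat.lt_succ_iff.mp (Nat.mod_lt _ (by norm_num))
    have hby : ∀ p, y / 2 ^ p % 2 ≤ 1 := fun p => Nat.lt_succ_iff.mp (Nat.mod_lt _ (by norm_num))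
    have hx' : x / 2 ^ T = ∑ p ∈ range (m - T), (x / 2 ^ (T + p) % 2) * 2 ^ p := by
      conv_lhs => rw [bits_repr m x hx]
      rw [sum_bits_div _ hbx m T hT]
    have hy' : y / 2 ^ T = ∑ p ∈ range (m - T), (y / 2 ^ (T + p) % 2) * 2 ^ p := by
      conv_lhs => rw [bits_repr m y hy]
      rw [sum_bits_div _ hby m T hT]
    rw [hx', hy']
    refine Finset.sum_congr rfl fun p hp => ?_
    rw [Finset.mem_range] at hp
    rw [h (T + p) (Nat.le_add_right _ _) (by omega)]

lemma sum_div_mod (f : ℕ → ℕ → ℕ) (m n : ℕ) (hn : 0 < n) :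
    ∑ t ∈ range m, ∑ d ∈ range n, f t d = ∑ q ∈ range (m * n), f (q / n) (q % n) := by
  induction m with
  | zero => simp
  | succ k ih =>
    rw [Finset.sum_range_succ, ih, Nat.succ_mul, Finset.sum_range_add]
    congr 1
    refine Finset.sum_congr rfl fun d hd => ?_
    rw [Finset.mem_range] at hd
    have h1 : (k * n + d) / n = k := by
      rw [Nat.add_comm, Nat.add_mul_div_right _ _ hn, Nat.div_eq_of_lt hd, Nat.zero_add]
    have h2 : (k * n + d) % n = d := by
      rw [Nat.add_comm, Nat.add_mul_mod_self_right, Nat.mod_eq_of_lt hd]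
    rw [h1, h2]

/-- the bit of the interleaved value at (0-based, LSB-first) position `p`. -/
def ibit (Δ μ : ℕ) (hΔ : 0 < Δ) (i : Fin Δ → Fin (2 ^ μ)) (p : ℕ) : ℕ :=
  (i ⟨(Δ * μ - 1 - p) % Δ, Nat.mod_lt _ hΔ⟩).val / 2 ^ (μ - 1 - (Δ * μ - 1 - p) / Δ) % 2

lemma ibit_le (Δ μ : ℕ) (hΔ : 0 < Δ) (i : Fin Δ → Fin (2 ^ μ)) (p : ℕ) :
    ibit Δ μ hΔ i p ≤ 1 :=
  Nat.lt_succ_iff.mp (Nat.mod_lt _ (by norm_num))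

lemma interleave_val (Δ μ : ℕ) (hΔ : 0 < Δ) (i : Fin Δ → Fin (2 ^ μ)) :
    (interleave Δ μ i).val = ∑ p ∈ range (Δ * μ), ibit Δ μ hΔ i p * 2 ^ p := by
  have key : (∑ t : Fin μ, ∑ δ : Fin Δ,
      ((i δ).val / 2 ^ (μ - 1 - t.val)) % 2 * 2 ^ (Δ * μ - 1 - (t.val * Δ + δ.val)))
      = ∑ p ∈ range (Δ * μ), ibit Δ μ hΔ i p * 2 ^ p := by
    set F : ℕ → ℕ → ℕ := fun t d =>
      ((i ⟨d % Δ, Nat.mod_lt _ hΔ⟩).val / 2 ^ (μ - 1 - t)) % 2 * 2 ^ (Δ * μ - 1 - (t * Δ + d))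
      with hF
    have step1 : (∑ t : Fin μ, ∑ δ : Fin Δ,
        ((i δ).val / 2 ^ (μ - 1 - t.val)) % 2 * 2 ^ (Δ * μ - 1 - (t.val * Δ + δ.val)))
        = ∑ t ∈ range μ, ∑ d ∈ range Δ, F t d := by
      rw [← Fin.sum_univ_eq_sum_range (fun t => ∑ d ∈ range Δ, F t d) μ]
      refine Finset.sum_congr rfl fun t _ => ?_
      rw [← Fin.sum_univ_eq_sum_range (fun d => F t.val d) Δ]
      refine Finset.sum_congr rfl fun δ _ => ?_
      simp only [hF, Nat.mod_eq_of_lt δ.isLt, Fin.eta]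
    rw [step1, sum_div_mod F μ Δ hΔ, mul_comm μ Δ, ← Finset.sum_range_reflect]
    refine Finset.sum_congr rfl fun p hp => ?_
    rw [Finset.mem_range] at hp
    simp only [hF, ibit, Nat.mod_mod_of_dvd _ (dvd_refl Δ)]
    congr 1
    have ha : (Δ * μ - 1 - p) / Δ * Δ + (Δ * μ - 1 - p) % Δ = Δ * μ - 1 - p :=
      Nat.div_add_mod' _ _
    rw [ha]
    congr 1
    omega
  show _ % 2 ^ (Δ * μ) = _
  rw [key, Nat.mod_eq_of_lt (sum_bits_lt _ (ibit_le Δ μ hΔ i) _)]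

lemma interleave_bit (Δ μ : ℕ) (hΔ : 0 < Δ) (i : Fin Δ → Fin (2 ^ μ)) (u : ℕ)
    (hu : u < Δ * μ) :
    (interleave Δ μ i).val / 2 ^ u % 2 = ibit Δ μ hΔ i u := by
  rw [interleave_val Δ μ hΔ i, sum_bits_bit _ (ibit_le Δ μ hΔ i) _ _ hu]

lemma interleave_sep (Δ μ : ℕ) (hΔ : 0 < Δ) (hμ : 1 ≤ μ) (μ' δ : ℕ) (hμ' : μ' ≤ μ)
    (hδ : δ < Δ) (l : ℕ) (hl : l = Δ * μ' + δ) (hlN : l ≤ Δ * μ)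
    (i j : Fin Δ → Fin (2 ^ μ)) :
    (interleave Δ μ i).val / 2 ^ (Δ * μ - l) = (interleave Δ μ j).val / 2 ^ (Δ * μ - l) ↔
    ∀ δ' : Fin Δ, (i δ').val / 2 ^ (if δ'.val < δ then μ - μ' - 1 else μ - μ')
                = (j δ').val / 2 ^ (if δ'.val < δ then μ - μ' - 1 else μ - μ') := by
  have hcomm : μ' * Δ = Δ * μ' := Nat.mul_comm _ _
  rw [div_pow_eq_iff_bits (Δ * μ) _ _ _ (interleave Δ μ i).isLt (interleave Δ μ j).isLt
    (Nat.sub_le _ _)]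
  have hbit : ∀ u, u < Δ * μ →
      ((interleave Δ μ i).val / 2 ^ u % 2 = (interleave Δ μ j).val / 2 ^ u % 2 ↔
        ibit Δ μ hΔ i u = ibit Δ μ hΔ j u) := fun u hu => by
    rw [interleave_bit _ _ hΔ _ u hu, interleave_bit _ _ hΔ _ u hu]
  constructor
  · intro h δ'
    rw [div_pow_eq_iff_bits μ _ _ _ (i δ').isLt (j δ').isLt (by split <;> omega)]
    intro u hTu huμ
    set t := μ - 1 - u with ht
    set q := δ'.val + t * Δ with hq2
    have hδ'Δ := δ'.isLt
    have hqlt : q < l := by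
      by_cases hc : δ'.val < δ
      · rw [if_pos hc] at hTu
        have hμ'μ : μ' < μ := by
          by_contra hcon
          push_neg at hcon
          have h5 : Δ * μ ≤ Δ * μ' := Nat.mul_le_mul_left Δ hcon
          omega
        have htle : t ≤ μ' := by omega
        have h6 : t * Δ ≤ μ' * Δ := Nat.mul_le_mul_right Δ htle
        omega
      · rw [if_neg hc] at hTu
        have htlt : t < μ' := by omega
        have h6 : (t + 1) * Δ ≤ μ' * Δ := Nat.mul_le_mul_right Δ (by omega)
        have h7 : (t + 1) * Δ = t * Δ + Δ := by ring
        omega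
    set p := Δ * μ - 1 - q with hp2
    have hpN : p < Δ * μ := by omega
    have h8 := (hbit p hpN).mp (h p (by omega) hpN)
    have hN1p : Δ * μ - 1 - p = q := by omega
    have e1 : (Δ * μ - 1 - p) % Δ = δ'.val := by
      rw [hN1p, hq2, Nat.add_mul_mod_self_right, Nat.mod_eq_of_lt hδ'Δ]
    have e2 : (Δ * μ - 1 - p) / Δ = t := by
      rw [hN1p, hq2, Nat.add_mul_div_right _ _ hΔ, Nat.div_eq_of_lt hδ'Δ, Nat.zero_add]
    have e3 : μ - 1 - t = u := by omega
    simp only [ibit, e1, e2, e3, Fin.eta] at h8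
    exact h8
  · intro h p hsp hpN
    rw [hbit p hpN]
    have hc0 : μ * Δ = Δ * μ := Nat.mul_comm _ _
    obtain ⟨q, hq2⟩ : ∃ q, Δ * μ - 1 - p = q := ⟨_, rfl⟩
    have hqlt : q < l := by omega
    obtain ⟨t, r, hdm, hrΔ, htdef, hrdef⟩ :
        ∃ t r, t * Δ + r = q ∧ r < Δ ∧ q / Δ = t ∧ q % Δ = r :=
      ⟨q / Δ, q % Δ, Nat.div_add_mod' _ _, Nat.mod_lt _ hΔ, rfl, rfl⟩
    have htμ : t < μ := by
      have h5 : t * Δ < μ * Δ := by omega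
      exact Nat.lt_of_mul_lt_mul_right h5
    have hu1 : μ - 1 - t < μ := by omega
    have hu2 : (if r < δ then μ - μ' - 1 else μ - μ') ≤ μ - 1 - t := by
      by_cases hc : r < δ
      · rw [if_pos hc]
        have h6 : t ≤ μ' := by
          by_contra hcon
          push_neg at hcon
          have h7 : (μ' + 1) * Δ ≤ t * Δ := Nat.mul_le_mul_right Δ hcon
          have h8 : (μ' + 1) * Δ = Δ * μ' + Δ := by ring
          omega
        omega
      · rw [if_neg hc]
        have h6 : t < μ' := by
          by_contra hcon
          push_neg at hcon
          have h7 : μ' * Δ ≤ t * Δ := Nat.mul_le_mul_right Δ hcon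
          have h8 : μ' * Δ = Δ * μ' := by ring
          omega
        omega
    have h9 := (div_pow_eq_iff_bits μ _ _ _ (i ⟨r, hrΔ⟩).isLt (j ⟨r, hrΔ⟩).isLt
      (show (if (⟨r, hrΔ⟩ : Fin Δ).val < δ then μ - μ' - 1 else μ - μ') ≤ μ by
        split <;> omega)).mp (h ⟨r, hrΔ⟩) (μ - 1 - t) hu2 hu1
    simp only [ibit, hq2, htdef, hrdef]
    exact h9

lemma lt_div_succ_mul (a b : ℕ) (hb : 0 < b) : a < (a / b + 1) * b := by
  rw [add_mul, one_mul]
  have h1 := Nat.div_add_mod' a b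
  have h2 := Nat.mod_lt a hb
  omega

/-- (i) The interleaving map `ι : (Fin m)^Δ → Fin d`, `d = m^Δ = 2^{Δμ}`, is a bijection;
(ii) for every level `l = Δμ' + δ` (`0 ≤ μ' ≤ μ`, `0 ≤ δ < Δ`, `l ≤ Δμ`) and block index
`1 ≤ k ≤ 2^l`, the preimage under `ι` of the hierarchical block `I_k^{(l)}` is a Cartesian
product of dyadic intervals, where the interval on axis `δ'` has length `2^{μ-μ'-1}` if
`δ' ≤ δ` and `2^{μ-μ'}` if `δ' > δ` (axes here 0-based, so the condition reads `δ'.val < δ`). -/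
theorem interleave_bijective_and_blocks_are_boxes (Δ μ : ℕ) (hΔ : 1 ≤ Δ) (hμ : 1 ≤ μ) :
    Function.Bijective (interleave Δ μ) ∧
    ∀ μ' δ : ℕ, μ' ≤ μ → δ < Δ →
      ∀ l : ℕ, l = Δ * μ' + δ → l ≤ Δ * μ →
        ∀ k : ℕ, 1 ≤ k → k ≤ 2 ^ l →
          ∃ c : Fin Δ → ℕ,
            ∀ i : Fin Δ → Fin (2 ^ μ),
              (2 ^ (Δ * μ - l) * (k - 1) ≤ (interleave Δ μ i).val ∧
                  (interleave Δ μ i).val < 2 ^ (Δ * μ - l) * k) ↔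
                ∀ δ' : Fin Δ,
                  c δ' * 2 ^ (if δ'.val < δ then μ - μ' - 1 else μ - μ') ≤ (i δ').val ∧
                  (i δ').val < (c δ' + 1) * 2 ^ (if δ'.val < δ then μ - μ' - 1 else μ - μ') := by

  have hΔ0 : 0 < Δ := hΔ
  have hinj : Function.Injective (interleave Δ μ) := by
    intro i j hij
    funext δ'
    have hsep := interleave_sep Δ μ hΔ0 hμ μ 0 le_rfl hΔ0 (Δ * μ) (by ring) le_rfl i j
    have h0 : (interleave Δ μ i).val / 2 ^ (Δ * μ - Δ * μ)
        = (interleave Δ μ j).val / 2 ^ (Δ * μ - Δ * μ) := by rw [hij]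
    have h1 := hsep.mp h0 δ'
    simp only [Nat.not_lt_zero, if_false, Nat.sub_self, pow_zero, Nat.div_one] at h1
    exact Fin.ext h1
  have hbij : Function.Bijective (interleave Δ μ) := by
    rw [Fintype.bijective_iff_injective_and_card]
    refine ⟨hinj, ?_⟩
    simp only [Fintype.card_fun, Fintype.card_fin]
    rw [← pow_mul, mul_comm μ Δ]
  refine ⟨hbij, ?_⟩
  intro μ' δ hμ' hδ l hl hlN k hk1 hk2
  have hpow : 0 < 2 ^ (Δ * μ - l) := Nat.pow_pos (by norm_num)
  have hklt : (k - 1) * 2 ^ (Δ * μ - l) < 2 ^ (Δ * μ) := by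
    calc (k - 1) * 2 ^ (Δ * μ - l) < 2 ^ l * 2 ^ (Δ * μ - l) :=
          (Nat.mul_lt_mul_right hpow).mpr (by omega)
      _ = 2 ^ (Δ * μ) := by rw [← pow_add]; congr 1; omega
  obtain ⟨i₀, hi₀⟩ := hbij.surjective ⟨(k - 1) * 2 ^ (Δ * μ - l), hklt⟩
  have hi₀v : (interleave Δ μ i₀).val = (k - 1) * 2 ^ (Δ * μ - l) := by rw [hi₀]
  have hdiv : (interleave Δ μ i₀).val / 2 ^ (Δ * μ - l) = k - 1 := by
    rw [hi₀v, Nat.mul_div_cancel _ hpow]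
  refine ⟨fun δ' => (i₀ δ').val / 2 ^ (if δ'.val < δ then μ - μ' - 1 else μ - μ'),
    fun i => ?_⟩
  have hsep := interleave_sep Δ μ hΔ0 hμ μ' δ hμ' hδ l hl hlN i i₀
  constructor
  · rintro ⟨h1, h2⟩
    have hq : (interleave Δ μ i).val / 2 ^ (Δ * μ - l) = k - 1 := by
      refine Nat.div_eq_of_lt_le (by rw [mul_comm]; exact h1) ?_
      have hk : (k - 1).succ * 2 ^ (Δ * μ - l) = 2 ^ (Δ * μ - l) * k := by
        rw [Nat.succ_eq_add_one]
        have : k - 1 + 1 = k := by omega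
        rw [this, mul_comm]
      rw [hk]; exact h2
    have hall := hsep.mp (hq.trans hdiv.symm)
    intro δ'
    have hδ' := hall δ'
    beta_reduce
    constructor
    · rw [← hδ']
      exact Nat.div_mul_le_self _ _
    · rw [← hδ']
      exact lt_div_succ_mul _ _ (Nat.pow_pos (by norm_num))
  · intro hbox
    have hbox' := fun δ' => hbox δ'
    have hall : ∀ δ' : Fin Δ,
        (i δ').val / 2 ^ (if δ'.val < δ then μ - μ' - 1 else μ - μ')
        = (i₀ δ').val / 2 ^ (if δ'.val < δ then μ - μ' - 1 else μ - μ') := fun δ' => by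
      obtain ⟨hb1, hb2⟩ := hbox δ'
      exact Nat.div_eq_of_lt_le hb1 hb2
    have hq := hsep.mpr hall
    rw [hdiv] at hq
    constructor
    · rw [mul_comm, ← hq]
      exact Nat.div_mul_le_self _ _
    · have := lt_div_succ_mul (interleave Δ μ i).val _ hpow
      rw [hq] at this
      have hk : (k - 1 + 1) * 2 ^ (Δ * μ - l) = 2 ^ (Δ * μ - l) * k := by
        have : k - 1 + 1 = k := by omega
        rw [this, mul_comm]
      rw [hk] at this
      exact this
end
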